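/- Suppose M has unique left inverses and A is a DTSM deterministic M-automaton over X accepting the normal subgroup Q ⊆ F. Let J ⊆ X* be the set of words w such that (m, w) labels a path in A from some terminal state to some terminal state for some m ∈ M, and let K = { w̄Q : w ∈ J } ⊆ F/Q. Then K is a subgroup of F/Q, and the index of K in F/Q is at most the number of states of A. -/

import Mathlib

/-- A monoid `M` has *unique left inverses* if whenever `b * a = 1 = c * a` we have `b = c`. -/
def UniqueLeftInverses (M : Type) [Monoid M] : Prop :=
  ∀ a b c : M, b * a = 1 → c * a = 1 → b = c

/-- The word problem of a group `H`, generated as a monoid by the image of `φ : X → H`,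
is the set of words over `X` representing the identity of `H`. -/
def wordProblem {H : Type} [Group H] {X : Type} (φ : X → H) : Set (List X) :=
  {w | (w.map φ).prod = 1}

/-- A deterministic `M`-automaton over the alphabet `X`: a finite directed graph with
a distinguished initial state, a set of terminal states, and edges labelled by pairs in
`M × X`, such that each state has at most one outgoing edge per letter of `X`. -/
structure DetMAutomaton (M : Type) [Monoid M] (X : Type) where
  State : Type
  [stateFintype : Fintype State]
  init : State
  terminal : Set State
  edge : State → M × X → State → Prop
  det : ∀ ⦃p : State⦄ ⦃x : X⦄ ⦃g h : M⦄ ⦃q r : State⦄,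
      edge p (g, x) q → edge p (h, x) r → g = h ∧ q = r

namespace DetMAutomaton

variable {M : Type} [Monoid M] {X : Type}

/-- `A.Path p m w q` means there is a path from `p` to `q` labelled `(m, w)`: the
`X`-components of its edge labels spell out `w` in order, and the `M`-components
multiply in order to `m`. -/
inductive Path (A : DetMAutomaton M X) : A.State → M → List X → A.State → Prop
  | nil (p : A.State) : Path A p 1 [] p
  | cons {p q r : A.State} {g h : M} {x : X} {w : List X} :
      A.edge p (g, x) q → Path A q h w r → Path A p (g * h) (x :: w) r

/-- The language accepted by a deterministic `M`-automaton: all words `w` such that some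
path labelled `(1, w)` leads from the initial state to a terminal state. -/
def Lang (A : DetMAutomaton M X) : Set (List X) :=
  {w | ∃ q ∈ A.terminal, A.Path A.init 1 w q}

/-- A deterministic `M`-automaton is *deterministic terminal state minimal* (DTSM) if no
deterministic `M`-automaton accepting the same language has strictly fewer terminal states. -/
def DTSM (A : DetMAutomaton M X) : Prop :=
  ∀ B : DetMAutomaton M X, B.Lang = A.Lang → Nat.card A.terminal ≤ Nat.card B.terminal

end DetMAutomaton

-- ============ auxiliary lemmas ============
namespace DetMAutomaton

variable {M : Type} [Monoid M] {X : Type} (A : DetMAutomaton M X)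

lemma path_nil {p q : A.State} {m : M} (h : A.Path p m [] q) : p = q ∧ m = 1 := by
  cases h; exact ⟨rfl, rfl⟩

lemma path_append : ∀ {p q r : A.State} {m₁ m₂ : M} {w₁ w₂ : List X},
    A.Path p m₁ w₁ q → A.Path q m₂ w₂ r → A.Path p (m₁ * m₂) (w₁ ++ w₂) r := by
  intro p q r m₁ m₂ w₁ w₂ h₁
  induction h₁ with
  | nil p => intro h₂; simpa using h₂
  | cons e _ ih => intro h₂; rw [mul_assoc]; exact Path.cons e (ih h₂)

lemma path_split : ∀ (w₁ : List X) {p q : A.State} {m : M} {w₂ : List X},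
    A.Path p m (w₁ ++ w₂) q →
    ∃ s m₁ m₂, A.Path p m₁ w₁ s ∧ A.Path s m₂ w₂ q ∧ m = m₁ * m₂ := by
  intro w₁
  induction w₁ with
  | nil => intro p q m w₂ h; exact ⟨p, 1, m, Path.nil p, h, (one_mul m).symm⟩
  | cons x w₁ ih =>
    intro p q m w₂ h
    cases h with
    | cons e hp =>
      obtain ⟨s, m₁, m₂, h₁, h₂, rfl⟩ := ih hp
      exact ⟨s, _ * m₁, m₂, Path.cons e h₁, h₂, (mul_assoc _ _ _).symm⟩

lemma path_unique : ∀ {w : List X} {p q q' : A.State} {m m' : M},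
    A.Path p m w q → A.Path p m' w q' → m = m' ∧ q = q' := by
  intro w
  induction w with
  | nil =>
    intro p q q' m m' h h'
    obtain ⟨rfl, rfl⟩ := A.path_nil h
    obtain ⟨rfl, rfl⟩ := A.path_nil h'
    exact ⟨rfl, rfl⟩
  | cons x w ih =>
    intro p q q' m m' h h'
    cases h with
    | cons e hp =>
      cases h' with
      | cons e' hp' =>
        obtain ⟨rfl, rfl⟩ := A.det e e'
        obtain ⟨rfl, rfl⟩ := ih hp hp'
        exact ⟨rfl, rfl⟩

/-- Same automaton with a new initial state and terminal set. -/
def reinit (i : A.State) (T : Set A.State) : DetMAutomaton M X where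
  State := A.State
  stateFintype := A.stateFintype
  init := i
  terminal := T
  edge := A.edge
  det := A.det

lemma reinit_path {i : A.State} {T : Set A.State} {p q : A.State} {m : M} {w : List X} :
    (A.reinit i T).Path p m w q ↔ A.Path p m w q := by
  constructor
  · intro h
    exact Path.rec (A := A.reinit i T) (motive := fun p m w q _ => A.Path p m w q)
      (fun p => Path.nil (A := A) p) (fun e _ ih => Path.cons (A := A) e ih) h
  · intro h
    exact Path.rec (A := A) (motive := fun p m w q _ => (A.reinit i T).Path p m w q)
      (fun p => Path.nil (A := A.reinit i T) p) (fun e _ ih => Path.cons (A := A.reinit i T) e ih) h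

lemma reinit_lang {i : A.State} {T : Set A.State} :
    (A.reinit i T).Lang = {w | ∃ q ∈ T, A.Path i 1 w q} := by
  ext w
  constructor
  · rintro ⟨q, hq, h⟩; exact ⟨q, hq, (A.reinit_path).1 h⟩
  · rintro ⟨q, hq, h⟩; exact ⟨q, hq, (A.reinit_path).2 h⟩

end DetMAutomaton

-- ======== context lemmas ========
namespace DetMAutomaton

variable {M : Type} [Monoid M] {F : Type} [Group F] {X : Type}
variable (ι : X → F) (Q : Subgroup F) (A : DetMAutomaton M X)

lemma mem_L (hacc : A.Lang = {w : List X | (w.map ι).prod ∈ Q}) {w : List X}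
    (h : (w.map ι).prod ∈ Q) : ∃ q ∈ A.terminal, A.Path A.init 1 w q := by
  have : w ∈ A.Lang := by rw [hacc]; exact h
  exact this

lemma reach_ext (hgen : ∀ f : F, ∃ w : List X, (w.map ι).prod = f)
    (hacc : A.Lang = {w : List X | (w.map ι).prod ∈ Q})
    {w₀ : List X} {m₀ : M} {s : A.State} (h : A.Path A.init m₀ w₀ s) (w : List X) :
    ∃ m q, A.Path s m w q := by
  obtain ⟨v, hv⟩ := hgen (((w₀ ++ w).map ι).prod)⁻¹
  have hone : ((w₀ ++ (w ++ v)).map ι).prod = 1 := by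
    rw [List.map_append, List.prod_append, List.map_append, List.prod_append, hv,
      List.map_append, List.prod_append]
    group
  have hQ : ((w₀ ++ (w ++ v)).map ι).prod ∈ Q := by rw [hone]; exact Q.one_mem
  obtain ⟨e, _, hp⟩ := A.mem_L ι Q hacc hQ
  obtain ⟨s₁, m₁, m₂, h₁, h₂, -⟩ := A.path_split w₀ hp
  obtain ⟨-, rfl⟩ := A.path_unique h h₁
  obtain ⟨s₂, n₁, n₂, g₁, -, -⟩ := A.path_split w h₂
  exact ⟨n₁, s₂, g₁⟩

lemma terminal_reached (hacc : A.Lang = {w : List X | (w.map ι).prod ∈ Q})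
    (hmin : A.DTSM) :
    ∀ t ∈ A.terminal, ∃ u, ((u.map ι).prod ∈ Q) ∧ A.Path A.init 1 u t := by
  classical
  haveI := A.stateFintype
  set T' : Set A.State :=
    {t | t ∈ A.terminal ∧ ∃ u, ((u.map ι).prod ∈ Q) ∧ A.Path A.init 1 u t} with hT'
  have hsub : T' ⊆ A.terminal := fun t ht => ht.1
  have hlang : (A.reinit A.init T').Lang = A.Lang := by
    rw [A.reinit_lang]
    ext w
    constructor
    · rintro ⟨q, hq, h⟩
      exact ⟨q, hq.1, h⟩
    · intro hw
      have hQ : (w.map ι).prod ∈ Q := by rw [hacc] at hw; exact hw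
      obtain ⟨q, hq, h⟩ := hw
      exact ⟨q, ⟨hq, w, hQ, h⟩, h⟩
  have hcard : Nat.card A.terminal ≤ Nat.card T' := hmin _ hlang
  have heq : T' = A.terminal := by
    refine Set.eq_of_subset_of_ncard_le hsub ?_ (Set.toFinite _)
    rw [← Nat.card_coe_set_eq, ← Nat.card_coe_set_eq]
    exact hcard
  intro t ht
  rw [← heq] at ht
  exact ht.2

lemma qword_path (hacc : A.Lang = {w : List X | (w.map ι).prod ∈ Q}) (hmin : A.DTSM)
    {t : A.State} (ht : t ∈ A.terminal) {c : List X} (hc : (c.map ι).prod ∈ Q) :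
    ∃ q ∈ A.terminal, A.Path t 1 c q := by
  obtain ⟨u, huQ, hu⟩ := A.terminal_reached ι Q hacc hmin t ht
  have hQ : ((u ++ c).map ι).prod ∈ Q := by
    rw [List.map_append, List.prod_append]; exact Q.mul_mem huQ hc
  obtain ⟨e, he, hp⟩ := A.mem_L ι Q hacc hQ
  obtain ⟨s₁, m₁, m₂, h₁, h₂, hm⟩ := A.path_split u hp
  obtain ⟨hm₁, hseq⟩ := A.path_unique hu h₁
  rw [← hseq] at h₂
  rw [← hm₁, one_mul] at hm
  rw [← hm] at h₂
  exact ⟨e, he, h₂⟩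

lemma terminal_to_terminal (hacc : A.Lang = {w : List X | (w.map ι).prod ∈ Q})
    (hmin : A.DTSM) {t t' : A.State} (ht : t ∈ A.terminal) (ht' : t' ∈ A.terminal) :
    ∃ c, ((c.map ι).prod ∈ Q) ∧ A.Path t 1 c t' := by
  classical
  haveI := A.stateFintype
  set R : Set A.State := {q | ∃ c, ((c.map ι).prod ∈ Q) ∧ A.Path t 1 c q} with hRdef
  have hsub : R ⊆ A.terminal := by
    rintro q ⟨c, hc, hpath⟩
    obtain ⟨q₀, hq₀, hp₀⟩ := A.qword_path ι Q hacc hmin ht hc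
    rw [(A.path_unique hpath hp₀).2]
    exact hq₀
  obtain ⟨u, huQ, hu⟩ := A.terminal_reached ι Q hacc hmin t ht
  have hlang : (A.reinit t R).Lang = A.Lang := by
    rw [A.reinit_lang]
    ext w
    constructor
    · rintro ⟨q, hq, h⟩
      have hp : A.Path A.init (1 * 1) (u ++ w) q := A.path_append hu h
      rw [one_mul] at hp
      have hL : (u ++ w) ∈ A.Lang := ⟨q, hsub hq, hp⟩
      rw [hacc] at hL
      have hL' : ((u ++ w).map ι).prod ∈ Q := hL
      rw [List.map_append, List.prod_append] at hL'
      have h2 := Q.mul_mem (Q.inv_mem huQ) hL'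
      rw [inv_mul_cancel_left] at h2
      rw [hacc]
      exact h2
    · intro hw
      have hQw : (w.map ι).prod ∈ Q := by rw [hacc] at hw; exact hw
      obtain ⟨q, hq, h⟩ := A.qword_path ι Q hacc hmin ht hQw
      exact ⟨q, ⟨w, hQw, h⟩, h⟩
  have hcard : Nat.card A.terminal ≤ Nat.card R := hmin _ hlang
  have heq : R = A.terminal := by
    refine Set.eq_of_subset_of_ncard_le hsub ?_ (Set.toFinite _)
    rw [← Nat.card_coe_set_eq, ← Nat.card_coe_set_eq]
    exact hcard
  rw [← heq] at ht'
  exact ht'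

lemma same_state_mem [Q.Normal] (hgen : ∀ f : F, ∃ w : List X, (w.map ι).prod = f)
    (hacc : A.Lang = {w : List X | (w.map ι).prod ∈ Q})
    {w w' : List X} {m m' : M} {s : A.State}
    (h : A.Path A.init m w s) (h' : A.Path A.init m' w' s) :
    ∃ z, (∃ n : M, ∃ p ∈ A.terminal, ∃ r ∈ A.terminal, A.Path p n z r) ∧
      (QuotientGroup.mk ((z.map ι).prod) : F ⧸ Q) =
        (QuotientGroup.mk ((w.map ι).prod) : F ⧸ Q) *
          (QuotientGroup.mk ((w'.map ι).prod) : F ⧸ Q)⁻¹ := by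
  obtain ⟨v, hv⟩ := hgen (((w.map ι).prod)⁻¹)
  obtain ⟨z, hz⟩ := hgen ((w.map ι).prod * ((w'.map ι).prod)⁻¹)
  have h1 : ((w ++ v).map ι).prod ∈ Q := by
    rw [List.map_append, List.prod_append, hv, mul_inv_cancel]
    exact Q.one_mem
  obtain ⟨e₁, he₁, hp₁⟩ := A.mem_L ι Q hacc h1
  obtain ⟨s₁, m₁, m₂, hA, hB, -⟩ := A.path_split w hp₁
  obtain ⟨-, hseq⟩ := A.path_unique h hA
  rw [← hseq] at hB
  have h2 : ((w' ++ (v ++ z)).map ι).prod ∈ Q := by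
    rw [List.map_append, List.prod_append, List.map_append, List.prod_append, hv, hz]
    have : (w'.map ι).prod * (((w.map ι).prod)⁻¹ *
        ((w.map ι).prod * ((w'.map ι).prod)⁻¹)) = 1 := by group
    rw [this]
    exact Q.one_mem
  obtain ⟨e₂, he₂, hp₂⟩ := A.mem_L ι Q hacc h2
  obtain ⟨s₁', m₁', m₂', hA', hB', -⟩ := A.path_split w' hp₂
  obtain ⟨-, hseq'⟩ := A.path_unique h' hA'
  rw [← hseq'] at hB'
  obtain ⟨t₁, n₁, n₂, hC, hD, -⟩ := A.path_split v hB'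
  obtain ⟨-, hteq⟩ := A.path_unique hB hC
  rw [← hteq] at hD
  refine ⟨z, ⟨n₂, e₁, he₁, e₂, he₂, hD⟩, ?_⟩
  rw [hz]
  rfl

end DetMAutomaton

/-- **Lemma 7.** Suppose `M` has unique left inverses and `A` is a DTSM deterministic
`M`-automaton accepting the normal subgroup `Q` of the free group `F` (generated as a monoid
by `X`). Let `J` be the set of words read along paths between terminal states, and let
`K = { w̄Q : w ∈ J } ⊆ F/Q`. Then `K` is a subgroup of `F/Q` of index at most the number of
states of `A`. -/
theorem DetMAutomaton.between_terminals_subgroup_finite_index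
    {M : Type} [Monoid M] (hM : UniqueLeftInverses M)
    {F : Type} [Group F] [IsFreeGroup F]
    {X : Type} [Fintype X] (ι : X → F)
    (hgen : ∀ f : F, ∃ w : List X, (w.map ι).prod = f)
    (Q : Subgroup F) [Q.Normal] (A : DetMAutomaton M X)
    (hacc : A.Lang = {w : List X | (w.map ι).prod ∈ Q}) (hmin : A.DTSM) :
    ∃ K : Subgroup (F ⧸ Q),
      (K : Set (F ⧸ Q)) =
        {x : F ⧸ Q | ∃ w : List X,
          (∃ m : M, ∃ p ∈ A.terminal, ∃ r ∈ A.terminal, A.Path p m w r) ∧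
          (QuotientGroup.mk ((w.map ι).prod) : F ⧸ Q) = x} ∧
      K.index ≠ 0 ∧ K.index ≤ Nat.card A.State := by
  classical
  haveI := A.stateFintype
  -- the initial state is terminal
  have hinit : A.init ∈ A.terminal := by
    have h1 : ((([] : List X)).map ι).prod ∈ Q := by
      simpa using Q.one_mem
    obtain ⟨q, hq, hp⟩ := A.mem_L ι Q hacc h1
    rw [(A.path_nil hp).1]
    exact hq
  set S : Set (F ⧸ Q) :=
    {x : F ⧸ Q | ∃ w : List X,
      (∃ m : M, ∃ p ∈ A.terminal, ∃ r ∈ A.terminal, A.Path p m w r) ∧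
      (QuotientGroup.mk ((w.map ι).prod) : F ⧸ Q) = x} with hS
  have one_mem : (1 : F ⧸ Q) ∈ S :=
    ⟨[], ⟨1, A.init, hinit, A.init, hinit, Path.nil A.init⟩, by simp⟩
  have mul_mem : ∀ {x y : F ⧸ Q}, x ∈ S → y ∈ S → x * y ∈ S := by
    rintro x y ⟨w₁, ⟨m₁, p₁, hp₁, r₁, hr₁, path₁⟩, rfl⟩
      ⟨w₂, ⟨m₂, p₂, hp₂, r₂, hr₂, path₂⟩, rfl⟩
    obtain ⟨c, hcQ, hc⟩ := A.terminal_to_terminal ι Q hacc hmin hr₁ hp₂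
    refine ⟨w₁ ++ (c ++ w₂),
      ⟨m₁ * (1 * m₂), p₁, hp₁, r₂, hr₂, A.path_append path₁ (A.path_append hc path₂)⟩, ?_⟩
    rw [List.map_append, List.prod_append, List.map_append, List.prod_append]
    have h1 : (QuotientGroup.mk ((c.map ι).prod) : F ⧸ Q) = 1 :=
      (QuotientGroup.eq_one_iff _).2 hcQ
    calc (QuotientGroup.mk ((w₁.map ι).prod * ((c.map ι).prod * (w₂.map ι).prod)) : F ⧸ Q)
        = QuotientGroup.mk ((w₁.map ι).prod) * (QuotientGroup.mk ((c.map ι).prod) *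
            QuotientGroup.mk ((w₂.map ι).prod)) := rfl
      _ = _ := by rw [h1, one_mul]
  have inv_mem : ∀ {x : F ⧸ Q}, x ∈ S → x⁻¹ ∈ S := by
    rintro x ⟨w, ⟨m, p, hp, r, hr, path⟩, rfl⟩
    obtain ⟨u, huQ, hu⟩ := A.terminal_reached ι Q hacc hmin p hp
    have hp2 : A.Path A.init (1 * m) (u ++ w) r := A.path_append hu path
    obtain ⟨v, hv⟩ := hgen ((((u ++ w)).map ι).prod)⁻¹
    obtain ⟨n, e, hne⟩ := A.reach_ext ι Q hgen hacc hp2 v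
    have hQv : ((u ++ w ++ v).map ι).prod ∈ Q := by
      rw [List.map_append, List.prod_append, hv, mul_inv_cancel]
      exact Q.one_mem
    obtain ⟨q, hqT, hq⟩ := A.mem_L ι Q hacc hQv
    have hfull : A.Path A.init ((1 * m) * n) ((u ++ w) ++ v) e := A.path_append hp2 hne
    obtain ⟨-, heq⟩ := A.path_unique hq hfull
    refine ⟨v, ⟨n, r, hr, e, heq ▸ hqT, hne⟩, ?_⟩
    rw [hv]
    have huone : (QuotientGroup.mk ((u.map ι).prod) : F ⧸ Q) = 1 :=
      (QuotientGroup.eq_one_iff _).2 huQ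
    calc (QuotientGroup.mk ((((u ++ w)).map ι).prod)⁻¹ : F ⧸ Q)
        = ((QuotientGroup.mk ((u.map ι).prod) : F ⧸ Q) *
            QuotientGroup.mk ((w.map ι).prod))⁻¹ := by
          rw [List.map_append, List.prod_append]; rfl
      _ = (QuotientGroup.mk ((w.map ι).prod) : F ⧸ Q)⁻¹ := by rw [huone, one_mul]
  set K : Subgroup (F ⧸ Q) :=
    { carrier := S, one_mem' := one_mem, mul_mem' := mul_mem, inv_mem' := inv_mem } with hK
  refine ⟨K, rfl, ?_⟩
  -- the injection from the coset space into the state set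
  have key : ∀ g : F ⧸ Q, ∃ (w : List X) (m : M) (s : A.State),
      (QuotientGroup.mk ((w.map ι).prod) : F ⧸ Q) = g⁻¹ ∧ A.Path A.init m w s := by
    intro g
    obtain ⟨f, hf⟩ := QuotientGroup.mk_surjective (g⁻¹ : F ⧸ Q)
    obtain ⟨w, hw⟩ := hgen f
    obtain ⟨m, s, hs⟩ := A.reach_ext ι Q hgen hacc (Path.nil A.init) w
    exact ⟨w, m, s, by rw [hw, hf], hs⟩
  choose wg mg sg hwg hpg using key
  have inj : Function.Injective (fun c : (F ⧸ Q) ⧸ K => sg (Quotient.out c)) := by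
    intro c c' hcc
    simp only at hcc
    have h2 := hpg (Quotient.out c')
    rw [← hcc] at h2
    obtain ⟨z, hzmem, hz⟩ := A.same_state_mem ι Q hgen hacc (hpg (Quotient.out c)) h2
    have hmem : (Quotient.out c)⁻¹ * (Quotient.out c') ∈ K := by
      have hzS : (QuotientGroup.mk ((z.map ι).prod) : F ⧸ Q) ∈ S := ⟨z, hzmem, rfl⟩
      rw [hz, hwg, hwg, inv_inv] at hzS
      exact hzS
    have : (QuotientGroup.mk (Quotient.out c) : (F ⧸ Q) ⧸ K) =
        QuotientGroup.mk (Quotient.out c') := QuotientGroup.eq.2 hmem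
    rwa [QuotientGroup.out_eq', QuotientGroup.out_eq'] at this
  haveI : Finite ((F ⧸ Q) ⧸ K) := Finite.of_injective _ inj
  constructor
  · exact Subgroup.index_ne_zero_of_finite
  · rw [Subgroup.index]
    exact Nat.card_le_card_of_injective _ inj
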